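/- For every integer J ≥ 1 one has det A_J^−(1,…,1) = (−1)^J·4. (Lemma 7.7(b)) -/

import Mathlib

open Matrix

def matA (J : ℕ) (ε : ℝ) (x : ℕ → ℝ) : Matrix (Fin J) (Fin J) ℝ :=
  Matrix.of fun i j =>
    (if (i : ℕ) = (j : ℕ) then -2 * x (i : ℕ) else 0)
    + (if (i : ℕ) + 1 = (j : ℕ) ∨ (j : ℕ) + 1 = (i : ℕ) then 1 else 0)
    + (if (i : ℕ) = 0 ∧ (j : ℕ) = J - 1 then ε else 0)
    + (if (j : ℕ) = 0 ∧ (i : ℕ) = J - 1 then ε else 0)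

/-- anti-periodic shift -/
def Sm (J : ℕ) : Matrix (Fin J) (Fin J) ℝ :=
  Matrix.of fun i j => if ((i : ℕ) + 1) % J = (j : ℕ) then
    (if (i : ℕ) + 1 = J then -1 else 1) else 0

lemma Sm_apply_eq (J : ℕ) (i j : Fin J) :
    Sm J i j = if j = ⟨((i : ℕ) + 1) % J, Nat.mod_lt _ (Nat.pos_of_ne_zero (by rintro rfl; exact absurd i.isLt (by omega)))⟩ then (if (i : ℕ) + 1 = J then (-1 : ℝ) else 1) else 0 := by
  simp [Sm, Fin.ext_iff, eq_comm]

lemma SST (J : ℕ) : Sm J * (Sm J)ᵀ = 1 := by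
  ext i j
  have hJ : 0 < J := i.pos
  have hinj : (((i : ℕ) + 1) % J = ((j : ℕ) + 1) % J) → i = j := by
    intro h
    have hi := i.isLt; have hj := j.isLt
    rcases Nat.lt_or_ge ((i : ℕ) + 1) J with h1 | h1
    · rw [Nat.mod_eq_of_lt h1] at h
      rcases Nat.lt_or_ge ((j : ℕ) + 1) J with h2 | h2
      · rw [Nat.mod_eq_of_lt h2] at h; exact Fin.ext (by omega)
      · have e : (j : ℕ) + 1 = J := by omega
        rw [e, Nat.mod_self] at h; omega
    · have e : (i : ℕ) + 1 = J := by omega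
      rw [e, Nat.mod_self] at h
      rcases Nat.lt_or_ge ((j : ℕ) + 1) J with h2 | h2
      · rw [Nat.mod_eq_of_lt h2] at h; omega
      · have e2 : (j : ℕ) + 1 = J := by omega
        exact Fin.ext (by omega)
  rw [Matrix.mul_apply]
  simp only [Matrix.transpose_apply]
  rw [Finset.sum_eq_single (⟨((j : ℕ) + 1) % J, Nat.mod_lt _ hJ⟩ : Fin J)]
  · by_cases h : i = j
    · subst h
      rw [Matrix.one_apply_eq]
      simp only [Sm, Matrix.of_apply, if_true]
      split_ifs <;> norm_num
    · rw [Matrix.one_apply_ne h]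
      have hne : ¬ ((i : ℕ) + 1) % J = ((j : ℕ) + 1) % J := fun hc => h (hinj hc)
      simp only [Sm, Matrix.of_apply]
      rw [if_neg hne, zero_mul]
  · intro b _ hb
    have hne : ¬ ((j : ℕ) + 1) % J = (b : ℕ) := by
      intro hc
      exact hb (Fin.ext hc.symm)
    simp only [Sm, Matrix.of_apply]
    rw [if_neg hne, mul_zero]
  · intro h
    exact absurd (Finset.mem_univ _) h

lemma matA_eq (J : ℕ) (hJ : 1 ≤ J) :
    matA J (-1) (fun _ => 1) = -((1 - Sm J) * (1 - Sm J)ᵀ) := by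
  have expand : (1 - Sm J) * (1 - Sm J)ᵀ = 1 - (Sm J)ᵀ - Sm J + 1 := by
    rw [Matrix.transpose_sub, Matrix.transpose_one, Matrix.sub_mul, Matrix.mul_sub,
      Matrix.mul_sub, Matrix.one_mul, Matrix.one_mul, Matrix.mul_one, SST]
    abel
  rw [expand]
  ext i j
  have hi := i.isLt; have hj := j.isLt
  simp only [matA, Sm, Matrix.neg_apply, Matrix.add_apply, Matrix.sub_apply,
    Matrix.one_apply, Matrix.transpose_apply, Matrix.of_apply, Fin.ext_iff]
  rcases Nat.lt_or_ge ((i : ℕ) + 1) J with h1 | h1 <;>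
  rcases Nat.lt_or_ge ((j : ℕ) + 1) J with h2 | h2
  · rw [Nat.mod_eq_of_lt h1, Nat.mod_eq_of_lt h2,
      if_neg (show ¬(i : ℕ) + 1 = J by omega), if_neg (show ¬(j : ℕ) + 1 = J by omega)]
    split_ifs <;> first | omega | (exfalso; omega) | norm_num
  · have e2 : (j : ℕ) + 1 = J := by omega
    rw [Nat.mod_eq_of_lt h1, e2, Nat.mod_self,
      if_neg (show ¬(i : ℕ) + 1 = J by omega)]
    split_ifs <;> first | omega | (exfalso; omega) | norm_num
  · have e1 : (i : ℕ) + 1 = J := by omega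
    rw [Nat.mod_eq_of_lt h2, e1, Nat.mod_self,
      if_neg (show ¬(j : ℕ) + 1 = J by omega)]
    split_ifs <;> first | omega | (exfalso; omega) | norm_num
  · have e1 : (i : ℕ) + 1 = J := by omega
    have e2 : (j : ℕ) + 1 = J := by omega
    rw [e1, e2, Nat.mod_self, if_pos rfl]
    split_ifs <;> first | omega | (exfalso; omega) | norm_num

lemma B_apply (J : ℕ) (i j : Fin J) : (1 - Sm J) i j =
    (if (i : ℕ) = (j : ℕ) then 1 else 0)
      - (if ((i : ℕ) + 1) % J = (j : ℕ) then (if (i : ℕ) + 1 = J then (-1 : ℝ) else 1) else 0) := by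
  simp [Sm, Matrix.sub_apply, Matrix.one_apply, Fin.ext_iff]

lemma mod_succ_eq (J a : ℕ) (h : a < J) : (a + 1) % J = if a + 1 = J then 0 else a + 1 := by
  split_ifs with h'
  · rw [h', Nat.mod_self]
  · exact Nat.mod_eq_of_lt (by omega)

lemma detB (J : ℕ) (hJ : 1 ≤ J) : (1 - Sm J).det = 2 := by
  match J with
  | 0 => omega
  | 1 =>
    rw [Matrix.det_fin_one, B_apply]
    norm_num
  | (n + 2) =>
    have key : ∀ i : Fin (n + 2),
        (-1 : ℝ) ^ (i : ℕ) * (1 - Sm (n + 2)) i 0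
          * ((1 - Sm (n + 2)).submatrix i.succAbove Fin.succ).det
        = (if i = 0 then 1 else 0) + (if i = Fin.last (n + 1) then 1 else 0) := by
      intro i
      rcases eq_or_ne i 0 with rfl | h0
      · rw [if_pos rfl, if_neg (by simp [Fin.ext_iff])]
        have hB : (1 - Sm (n + 2)) 0 0 = 1 := by
          rw [B_apply]
          rw [mod_succ_eq _ _ (by omega)]
          norm_num
        have hdet : ((1 - Sm (n + 2)).submatrix (Fin.succAbove 0) Fin.succ).det = 1 := by
          rw [Matrix.det_of_upperTriangular]
          · rw [Finset.prod_eq_one]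
            intro i _
            simp only [Matrix.submatrix_apply, Fin.zero_succAbove]
            rw [B_apply]
            simp only [Fin.val_succ]
            rw [mod_succ_eq (n + 2) ((i : ℕ) + 1) (by have := i.isLt; omega)]
            have hi := i.isLt
            split_ifs <;> first | exact False.elim ‹False› | omega | norm_num
          · intro a b hab
            simp only [id_eq] at hab
            have hab' : (b : ℕ) < (a : ℕ) := hab
            simp only [Matrix.submatrix_apply, Fin.zero_succAbove]
            rw [B_apply]
            simp only [Fin.val_succ]
            rw [mod_succ_eq (n + 2) ((a : ℕ) + 1) (by have := a.isLt; omega)]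
            have ha := a.isLt
            split_ifs <;> first | exact False.elim ‹False› | omega | norm_num
        rw [hB, hdet]
        norm_num
      · rcases eq_or_ne i (Fin.last (n + 1)) with rfl | hl
        · rw [if_neg h0, if_pos rfl]
          have hB : (1 - Sm (n + 2)) (Fin.last (n + 1)) 0 = 1 := by
            rw [B_apply]
            simp only [Fin.val_last, Fin.val_zero]
            rw [show (n + 1 + 1) % (n + 2) = 0 by simp]
            norm_num
          have hdet : ((1 - Sm (n + 2)).submatrix (Fin.last (n + 1)).succAbove Fin.succ).det
              = (-1 : ℝ) ^ (n + 1) := by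
            rw [Fin.succAbove_last, Matrix.det_of_lowerTriangular]
            · rw [Finset.prod_congr rfl (g := fun _ => (-1 : ℝ))]
              · rw [Finset.prod_const, Finset.card_univ, Fintype.card_fin]
              · intro i _
                simp only [Matrix.submatrix_apply, Fin.coe_castSucc]
                rw [B_apply]
                simp only [Fin.val_succ, Fin.coe_castSucc]
                rw [mod_succ_eq (n + 2) ((i : ℕ)) (by have := i.isLt; omega)]
                have hi := i.isLt
                split_ifs <;> first | exact False.elim ‹False› | omega | norm_num
            · intro a b hab
              have hab' : (a : ℕ) < (b : ℕ) := by simpa using hab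
              simp only [Matrix.submatrix_apply, Fin.coe_castSucc]
              rw [B_apply]
              simp only [Fin.val_succ, Fin.coe_castSucc]
              rw [mod_succ_eq (n + 2) ((a : ℕ)) (by have := a.isLt; omega)]
              have ha := a.isLt
              split_ifs <;> first | exact False.elim ‹False› | omega | norm_num
          rw [hB, hdet, Fin.val_last, mul_one, ← pow_add,
            show n + 1 + (n + 1) = 2 * (n + 1) by ring, pow_mul]
          norm_num
        · rw [if_neg h0, if_neg hl]
          have hB : (1 - Sm (n + 2)) i 0 = 0 := by
            rw [B_apply]
            have hi := i.isLt
            have h0' : (i : ℕ) ≠ 0 := fun h => h0 (Fin.ext h)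
            have hl' : (i : ℕ) ≠ n + 1 := fun h => hl (Fin.ext (by simp [h]))
            rw [mod_succ_eq _ _ (by omega)]
            simp only [Fin.val_zero]
            simp only [h0', (show ¬ (i : ℕ) + 1 = n + 2 by omega), if_false]
            split_ifs <;> first | exact False.elim ‹False› | omega | norm_num
          rw [hB]
          ring
    rw [Matrix.det_succ_column_zero, Finset.sum_congr rfl (fun i _ => key i),
      Finset.sum_add_distrib, Finset.sum_ite_eq' Finset.univ, Finset.sum_ite_eq' Finset.univ]
    norm_num

theorem detA_neg_ones (J : ℕ) (hJ : 1 ≤ J) :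
    (matA J (-1) (fun _ => 1)).det = (-1 : ℝ) ^ J * 4 := by
  rw [matA_eq J hJ, Matrix.det_neg, Matrix.det_mul, Matrix.det_transpose,
    detB J hJ]
  simp [Fintype.card_fin]
  norm_num
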